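/- Let g : [0,∞) → [0,∞) be strictly increasing and differentiable with g'(s) ≤ 1 for all s ∈ [κ−σ, κ] (some σ > 0). Let c > 0, h ≥ 0, and let φ, ψ : ℝ → (0,κ) be C² solutions of u''(t) − c u'(t) − u(t) + g(u(t − ch)) = 0 with φ(−∞)=ψ(−∞)=0, φ(+∞)=ψ(+∞)=κ. Suppose ψ(t) ≥ φ(t) for all t ∈ ℝ and there exists T with φ(T) = ψ(T) and ψ(T−ch) > φ(T−ch). Then evaluating the equation difference at T gives a contradiction; hence if ψ ≥ φ everywhere and ψ(t) > φ(t) for all t < T, then ψ(t) > φ(t) for all t ∈ ℝ. -/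

import Mathlib

open Real Set Filter Topology

lemma aux_second_deriv_nonneg {f : ℝ → ℝ} {m : ℝ}
    (hf : Differentiable ℝ f) (hf' : DifferentiableAt ℝ (deriv f) m)
    (hm : IsLocalMin f m) : 0 ≤ deriv (deriv f) m := by
  by_contra hneg
  push_neg at hneg
  have h0 : deriv f m = 0 := hm.deriv_eq_zero
  have hs : Tendsto (slope (deriv f) m) (𝓝[≠] m) (𝓝 (deriv (deriv f) m)) :=
    hasDerivAt_iff_tendsto_slope.mp hf'.hasDerivAt
  have hs' : Tendsto (slope (deriv f) m) (𝓝[>] m) (𝓝 (deriv (deriv f) m)) :=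
    hs.mono_left (nhdsWithin_mono _ (fun x hx => ne_of_gt hx))
  have hev : ∀ᶠ t in 𝓝[>] m, slope (deriv f) m t < 0 :=
    hs'.eventually (eventually_lt_nhds hneg)
  have hev2 : ∀ᶠ t in 𝓝[>] m, deriv f t < 0 := by
    filter_upwards [hev, self_mem_nhdsWithin] with t ht hmt
    rw [slope_def_field, h0, sub_zero] at ht
    have htm : 0 < t - m := sub_pos.mpr hmt
    by_contra hge'
    push_neg at hge'
    have : 0 ≤ (deriv f t) / (t - m) := div_nonneg hge' htm.le
    linarith [ht]
  have hloc : ∀ᶠ t in 𝓝[>] m, f m ≤ f t := hm.filter_mono nhdsWithin_le_nhds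
  obtain ⟨u, hu, hsub⟩ := mem_nhdsGT_iff_exists_Ioo_subset.mp (hev2.and hloc)
  have hmu : m < u := hu
  set p := (m + u) / 2 with hp
  have hmp : m < p := by simp [hp]; linarith
  have hpu : p < u := by simp [hp]; linarith
  have hanti : StrictAntiOn f (Icc m p) := by
    apply strictAntiOn_of_deriv_neg (convex_Icc m p) hf.continuous.continuousOn
    intro x hx
    rw [interior_Icc] at hx
    exact (hsub ⟨hx.1, lt_trans hx.2 hpu⟩).1
  have h1 : f p < f m := hanti (left_mem_Icc.mpr hmp.le) (right_mem_Icc.mpr hmp.le) hmp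
  have h2 : f m ≤ f p := (hsub ⟨hmp, hpu⟩).2
  linarith


/-- (Sliding lemma, case a_* = 0.) If φ, ψ are wavefront profiles
of u'' − cu' − u + g(u(·−ch)) = 0 with values in (0,κ), connecting 0 to κ,
g strictly increasing with g' ≤ 1 on [κ−σ,κ], ψ ≥ φ everywhere and ψ > φ on
(−∞,T), then ψ > φ everywhere. -/
theorem stmt_11 (κ σ c h : ℝ) (hκ : 0 < κ) (hσ : 0 < σ) (hc : 0 < c) (hh : 0 ≤ h)
    (g : ℝ → ℝ) (hgsm : StrictMonoOn g (Set.Ici (0 : ℝ)))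
    (hgdiff : ∀ s ∈ Set.Icc (κ - σ) κ, DifferentiableAt ℝ g s)
    (hg'le : ∀ s ∈ Set.Icc (κ - σ) κ, deriv g s ≤ 1)
    (φ ψ : ℝ → ℝ) (hφC2 : ContDiff ℝ 2 φ) (hψC2 : ContDiff ℝ 2 ψ)
    (hφrange : ∀ t, φ t ∈ Set.Ioo (0 : ℝ) κ) (hψrange : ∀ t, ψ t ∈ Set.Ioo (0 : ℝ) κ)
    (hφeq : ∀ t, deriv (deriv φ) t - c * deriv φ t - φ t + g (φ (t - c * h)) = 0)
    (hψeq : ∀ t, deriv (deriv ψ) t - c * deriv ψ t - ψ t + g (ψ (t - c * h)) = 0)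
    (hφbot : Filter.Tendsto φ Filter.atBot (nhds 0))
    (hφtop : Filter.Tendsto φ Filter.atTop (nhds κ))
    (hψbot : Filter.Tendsto ψ Filter.atBot (nhds 0))
    (hψtop : Filter.Tendsto ψ Filter.atTop (nhds κ))
    (hge : ∀ t, φ t ≤ ψ t)
    (T : ℝ) (hlt : ∀ t, t < T → φ t < ψ t) :
    ∀ t, φ t < ψ t := by
  by_contra hcon
  push_neg at hcon
  obtain ⟨t₀, ht₀⟩ := hcon
  have hweq : ψ t₀ = φ t₀ := le_antisymm ht₀ (hge t₀)
  -- differentiability facts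
  have hφsplit : Differentiable ℝ φ ∧ Differentiable ℝ (deriv φ) := by
    have h2 : ContDiff ℝ ((1:ℕ∞)+1) φ := by exact_mod_cast hφC2
    rw [contDiff_succ_iff_deriv] at h2
    exact ⟨h2.1, h2.2.2.differentiable (by simp)⟩
  have hψsplit : Differentiable ℝ ψ ∧ Differentiable ℝ (deriv ψ) := by
    have h2 : ContDiff ℝ ((1:ℕ∞)+1) ψ := by exact_mod_cast hψC2
    rw [contDiff_succ_iff_deriv] at h2
    exact ⟨h2.1, h2.2.2.differentiable (by simp)⟩
  obtain ⟨hφd, hφd2⟩ := hφsplit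
  obtain ⟨hψd, hψd2⟩ := hψsplit
  -- monotone consequence of strict monotonicity
  have hgmono : ∀ s, g (φ s) ≤ g (ψ s) := by
    intro s
    rcases eq_or_lt_of_le (hge s) with hEq | hLt
    · rw [hEq]
    · exact le_of_lt (hgsm (hφrange s).1.le (hψrange s).1.le hLt)
  -- the base point t₁
  set t₁ : ℝ := min T t₀ - 1 with ht₁def
  have ht₁T : t₁ < T := by have := min_le_left T t₀; linarith
  have ht₁t₀ : t₁ < t₀ := by have := min_le_right T t₀; linarith
  have hwt₁ : 0 < ψ t₁ - φ t₁ := sub_pos.mpr (hlt t₁ ht₁T)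
  -- epsilon
  have hzt₁ : 0 < Real.exp (t₀ - t₁) - 1 := by
    have : (1:ℝ) < Real.exp (t₀ - t₁) := by
      rw [show (1:ℝ) = Real.exp 0 by simp]
      exact Real.exp_lt_exp.mpr (by linarith)
    linarith
  set ε : ℝ := (ψ t₁ - φ t₁) / (Real.exp (t₀ - t₁) - 1) with hεdef
  have hε : 0 < ε := div_pos hwt₁ hzt₁
  -- the comparison function
  set v : ℝ → ℝ := fun t => ψ t - φ t - ε * (Real.exp (t₀ - t) - 1) with hvdef
  have hvt₁ : v t₁ = 0 := by
    simp only [hvdef, hεdef]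
    field_simp
    simp
  have hvt₀ : v t₀ = 0 := by simp [hvdef, hweq]
  -- derivatives of v
  have hzder : ∀ t, HasDerivAt (fun s => Real.exp (t₀ - s) - 1) (-Real.exp (t₀ - t)) t := by
    intro t
    have h1 : HasDerivAt (fun s : ℝ => t₀ - s) (-1) t := (hasDerivAt_id t).const_sub t₀
    have h2 := h1.exp
    have h3 := h2.sub_const 1
    exact h3.congr_deriv (by ring)
  have hvder : ∀ t, HasDerivAt v (deriv ψ t - deriv φ t + ε * Real.exp (t₀ - t)) t := by
    intro t
    have h1 := ((hψd t).hasDerivAt.sub (hφd t).hasDerivAt).sub ((hzder t).const_mul ε)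
    exact h1.congr_deriv (by ring)
  have hdv : deriv v = fun t => deriv ψ t - deriv φ t + ε * Real.exp (t₀ - t) :=
    funext fun t => (hvder t).deriv
  have hvd : Differentiable ℝ v := fun t => (hvder t).differentiableAt
  have hexpder : ∀ t, HasDerivAt (fun s => Real.exp (t₀ - s)) (-Real.exp (t₀ - t)) t := by
    intro t
    have h1 : HasDerivAt (fun s : ℝ => t₀ - s) (-1) t := (hasDerivAt_id t).const_sub t₀
    have h2 := h1.exp
    convert h2 using 1
    ring
  have hv2der : ∀ t, HasDerivAt (deriv v)
      (deriv (deriv ψ) t - deriv (deriv φ) t - ε * Real.exp (t₀ - t)) t := by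
    intro t
    rw [hdv]
    have h1 := ((hψd2 t).hasDerivAt.sub (hφd2 t).hasDerivAt).add ((hexpder t).const_mul ε)
    exact h1.congr_deriv (by ring)
  -- v ≥ 0 on [t₁, t₀]
  have hA : ∀ t ∈ Icc t₁ t₀, 0 ≤ v t := by
    obtain ⟨m, hmI, hmin⟩ := isCompact_Icc.exists_isMinOn (nonempty_Icc.mpr ht₁t₀.le)
      (hvd.continuous.continuousOn)
    rcases le_or_gt 0 (v m) with hvm | hvm
    · exact fun t ht => le_trans hvm (hmin ht)
    · exfalso
      have hmne₁ : m ≠ t₁ := fun hE => by rw [hE, hvt₁] at hvm; linarith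
      have hmne₀ : m ≠ t₀ := fun hE => by rw [hE, hvt₀] at hvm; linarith
      have hm1 : t₁ < m := lt_of_le_of_ne hmI.1 (Ne.symm hmne₁)
      have hm0 : m < t₀ := lt_of_le_of_ne hmI.2 hmne₀
      have hloc : IsLocalMin v m := hmin.isLocalMin (Icc_mem_nhds hm1 hm0)
      have hdv0 : deriv v m = 0 := hloc.deriv_eq_zero
      have hd2v : 0 ≤ deriv (deriv v) m :=
        aux_second_deriv_nonneg hvd (hv2der m).differentiableAt hloc
      -- formulas at m
      have e1 : deriv v m = deriv ψ m - deriv φ m + ε * Real.exp (t₀ - m) := (hvder m).deriv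
      have e2 : deriv (deriv v) m = deriv (deriv ψ) m - deriv (deriv φ) m
          - ε * Real.exp (t₀ - m) := (hv2der m).deriv
      have e3 := hψeq m
      have e4 := hφeq m
      have e5 := hgmono (m - c * h)
      have e6 : v m = ψ m - φ m - ε * (Real.exp (t₀ - m) - 1) := rfl
      have hex : 0 < Real.exp (t₀ - m) := Real.exp_pos _
      -- c * (deriv ψ m - deriv φ m) = -(c * (ε * exp (t₀ - m)))
      have h6' : deriv ψ m - deriv φ m = -(ε * Real.exp (t₀ - m)) := by
        rw [e1] at hdv0; linarith
      have hc6 : c * deriv ψ m - c * deriv φ m = -(c * (ε * Real.exp (t₀ - m))) := by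
        have := congrArg (fun x => c * x) h6'
        linarith [this]
      nlinarith [mul_pos hc (mul_pos hε hex), mul_pos hε hex]
  -- contradiction via derivative of v at t₀
  have hminw : IsLocalMin (fun t => ψ t - φ t) t₀ :=
    Filter.Eventually.of_forall (fun t => by
      simp only
      rw [hweq]
      linarith [hge t])
  have hwd0 : deriv (fun t => ψ t - φ t) t₀ = 0 := hminw.deriv_eq_zero
  have hwd0' : deriv ψ t₀ - deriv φ t₀ = 0 := by
    rw [← deriv_sub (hψd t₀) (hφd t₀)]
    exact hwd0
  have hvt0der : HasDerivAt v ε t₀ := by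
    have h1 := hvder t₀
    rw [hwd0'] at h1
    simpa using h1
  have hslope : Tendsto (slope v t₀) (𝓝[<] t₀) (𝓝 ε) :=
    (hasDerivAt_iff_tendsto_slope.mp hvt0der).mono_left
      (nhdsWithin_mono _ (fun x hx => ne_of_lt hx))
  have hub : ∀ᶠ t in 𝓝[<] t₀, slope v t₀ t ≤ 0 := by
    filter_upwards [Ioo_mem_nhdsLT_of_mem (right_mem_Ioc.mpr ht₁t₀)] with t ht
    rw [slope_def_field, hvt₀, sub_zero]
    apply div_nonpos_of_nonneg_of_nonpos
    · exact hA t ⟨ht.1.le, ht.2.le⟩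
    · linarith [ht.2]
  have : ε ≤ 0 := le_of_tendsto hslope hub
  linarith
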